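/- Let a be a real number with 1/√3 < a < √3, set c(a) = (9/8)(a + 1/a), and let k be any real number with k > F_a(0,0) = (9/64)(a + 1/a)². Then the level set {(x,y) ∈ ℝ² : F_a(x,y) = k} is a nonempty compact set homeomorphic to the circle S¹. (These level curves are the closed integral curves of the reduced dynamics encircling the origin.) -/

import Mathlib

/-- `F_a`, the Casimir `K` restricted to the light-cone paraboloid `{H_a(M,1) = 0}` of the
reduced Fefferman Hamiltonian, in the coordinates `(M₁, M₂) = (x, y)`. -/
noncomputable def Fa (a : ℝ) (p : ℝ × ℝ) : ℝ :=
  p.1 ^ 2 + p.2 ^ 2 + (1/9) * (a * p.1 ^ 2 + p.2 ^ 2 / a - (9/8) * (a + 1/a)) ^ 2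

private lemma sphere_mem_of (x y : ℝ) (h : x^2 + y^2 = 1) :
    (WithLp.toLp 2 ![x, y] : EuclideanSpace ℝ (Fin 2)) ∈
      Metric.sphere (0 : EuclideanSpace ℝ (Fin 2)) 1 := by
  refine mem_sphere_zero_iff_norm.mpr ?_
  rw [EuclideanSpace.norm_eq, Fin.sum_univ_two]
  simp only [Matrix.cons_val_zero, Matrix.cons_val_one, Matrix.head_cons,
    Real.norm_eq_abs, sq_abs]
  rw [h]
  exact Real.sqrt_one

private lemma sphere_sum_sq (u : EuclideanSpace ℝ (Fin 2))
    (hu : u ∈ Metric.sphere (0 : EuclideanSpace ℝ (Fin 2)) 1) :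
    (u 0)^2 + (u 1)^2 = 1 := by
  rw [mem_sphere_zero_iff_norm, EuclideanSpace.norm_eq, Fin.sum_univ_two] at hu
  have := Real.sqrt_eq_one.mp hu
  simpa [Real.norm_eq_abs, sq_abs] using this

set_option maxHeartbeats 1000000 in
theorem Fa_level_set_circle (a : ℝ)
    (ha₁ : 1 / Real.sqrt 3 < a) (ha₂ : a < Real.sqrt 3)
    (k : ℝ) (hk : (9/64) * (a + 1/a) ^ 2 < k) :
    ({p : ℝ × ℝ | Fa a p = k}).Nonempty ∧
    IsCompact {p : ℝ × ℝ | Fa a p = k} ∧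
    Nonempty ({p : ℝ × ℝ | Fa a p = k} ≃ₜ
      Metric.sphere (0 : EuclideanSpace ℝ (Fin 2)) 1) := by
  have h3 : Real.sqrt 3 ^ 2 = 3 := Real.sq_sqrt (by norm_num)
  have h3pos : (0:ℝ) < Real.sqrt 3 := Real.sqrt_pos.mpr (by norm_num)
  have ha : 0 < a := lt_trans (by positivity) ha₁
  have hainv : a * (1/a) = 1 := mul_one_div_cancel ha.ne'
  have ha2 : a ^ 2 < 3 := by nlinarith
  have ha3 : 1 < 3 * a ^ 2 := by
    have h1 : 1 < a * Real.sqrt 3 := by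
      rw [div_lt_iff₀ h3pos] at ha₁; linarith
    nlinarith
  have h2a : 2 ≤ a + 1/a := by nlinarith [sq_nonneg (a - 1)]
  have hk0 : 0 < k := by nlinarith
  -- strict monotonicity along rays
  have mono : ∀ x y : ℝ, 0 < x^2 + y^2 → StrictMonoOn
      (fun t : ℝ => t*(x^2+y^2) + (1/9)*(t*(a*x^2+y^2/a) - (9/8)*(a+1/a))^2)
      (Set.Ici 0) := by
    intro x y hA t1 ht1 t2 ht2 hlt
    simp only [Set.mem_Ici] at ht1 ht2
    have hBpos : 0 ≤ a*x^2 + y^2/a := by positivity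
    have hkey : 2*(a*x^2+y^2/a)*((9/8)*(a+1/a)) < 9*(x^2+y^2) := by
      have e : 9*(x^2+y^2) - 2*(a*x^2+y^2/a)*((9/8)*(a+1/a))
          = (9/4)*((3-a^2)*x^2 + ((3*a^2-1)/a^2)*y^2) := by
        field_simp; ring
      have h1 : 0 < 3 - a^2 := by linarith
      have h2 : 0 < (3*a^2-1)/a^2 := div_pos (by linarith) (by positivity)
      have hpos : 0 < (3-a^2)*x^2 + ((3*a^2-1)/a^2)*y^2 := by
        rcases (show 0 < x^2 ∨ 0 < y^2 by
          by_contra h; push_neg at h; nlinarith [sq_nonneg x, sq_nonneg y]) with h | h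
        · nlinarith [mul_nonneg h2.le (sq_nonneg y), mul_pos h1 h]
        · nlinarith [mul_nonneg h1.le (sq_nonneg x), mul_pos h2 h]
      linarith
    have hbr : 0 < (x^2+y^2) + (1/9)*((a*x^2+y^2/a)^2*(t1+t2)
        - 2*(a*x^2+y^2/a)*((9/8)*(a+1/a))) := by
      nlinarith [mul_nonneg (sq_nonneg (a*x^2+y^2/a)) (by linarith : (0:ℝ) ≤ t1+t2)]
    have hprod := mul_pos (sub_pos.mpr hlt) hbr
    simp only []
    nlinarith [hprod]
  -- existence along each unit direction
  have exist : ∀ x y : ℝ, x^2 + y^2 = 1 → ∃ t : ℝ, 0 < t ∧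
      t + (1/9)*(t*(a*x^2+y^2/a) - (9/8)*(a+1/a))^2 = k := by
    intro x y hxy
    have hcont : ContinuousOn
        (fun t : ℝ => t + (1/9)*(t*(a*x^2+y^2/a) - (9/8)*(a+1/a))^2)
        (Set.Icc 0 k) := by fun_prop
    have hg0 : (fun t : ℝ => t + (1/9)*(t*(a*x^2+y^2/a) - (9/8)*(a+1/a))^2) 0 < k := by
      simp only []
      nlinarith
    have hgk : k ≤ (fun t : ℝ => t + (1/9)*(t*(a*x^2+y^2/a) - (9/8)*(a+1/a))^2) k := by
      simp only []
      nlinarith [sq_nonneg (k*(a*x^2+y^2/a) - (9/8)*(a+1/a))]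
    obtain ⟨t, htmem, hgt⟩ := intermediate_value_Icc hk0.le hcont ⟨hg0.le, hgk⟩
    refine ⟨t, ?_, hgt⟩
    rcases eq_or_lt_of_le htmem.1 with h | h
    · exfalso; rw [← h] at hgt; simp only [] at hgt hg0; linarith
    · exact h
  -- points on the level set are away from the origin
  have hFa0 : ∀ p : ℝ × ℝ, Fa a p = k → 0 < p.1^2 + p.2^2 := by
    intro p hp
    by_contra h
    push_neg at h
    have hx : p.1 = 0 := by nlinarith [sq_nonneg p.1, sq_nonneg p.2]
    have hy : p.2 = 0 := by nlinarith [sq_nonneg p.1, sq_nonneg p.2]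
    unfold Fa at hp
    rw [hx, hy] at hp
    have : (9/64) * (a + 1/a) ^ 2 = k := by
      rw [← hp]; field_simp; ring
    linarith
  -- nonempty
  have hne : ({p : ℝ × ℝ | Fa a p = k}).Nonempty := by
    obtain ⟨t, ht, hgt⟩ := exist 1 0 (by norm_num)
    refine ⟨(Real.sqrt t, 0), ?_⟩
    have hst : Real.sqrt t ^ 2 = t := Real.sq_sqrt ht.le
    show Fa a (Real.sqrt t, 0) = k
    unfold Fa
    simp only []
    rw [hst]
    linear_combination hgt
  -- compact
  have hFacont : Continuous (Fa a) := by unfold Fa; fun_prop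
  have hclosed : IsClosed {p : ℝ × ℝ | Fa a p = k} :=
    isClosed_eq hFacont continuous_const
  have hcompact : IsCompact {p : ℝ × ℝ | Fa a p = k} := by
    refine IsCompact.of_isClosed_subset (isCompact_Icc
      (a := (-Real.sqrt k, -Real.sqrt k)) (b := (Real.sqrt k, Real.sqrt k))) hclosed ?_
    intro p hp
    have hp' : Fa a p = k := hp
    unfold Fa at hp'
    have h1 : p.1^2 ≤ k := by nlinarith [sq_nonneg p.2, sq_nonneg (a*p.1^2+p.2^2/a - (9/8)*(a+1/a))]
    have h2 : p.2^2 ≤ k := by nlinarith [sq_nonneg p.1, sq_nonneg (a*p.1^2+p.2^2/a - (9/8)*(a+1/a))]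
    have hsq := Real.sq_sqrt hk0.le
    have hsn := Real.sqrt_nonneg k
    simp only [Set.mem_Icc, Prod.le_def]
    refine ⟨⟨?_, ?_⟩, ?_, ?_⟩ <;>
      nlinarith [sq_nonneg (p.1 - Real.sqrt k), sq_nonneg (p.1 + Real.sqrt k),
        sq_nonneg (p.2 - Real.sqrt k), sq_nonneg (p.2 + Real.sqrt k)]
  refine ⟨hne, hcompact, ?_⟩
  -- the homeomorphism
  have : CompactSpace {p : ℝ × ℝ | Fa a p = k} := isCompact_iff_compactSpace.mp hcompact
  have hnpos : ∀ p : {p : ℝ × ℝ | Fa a p = k},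
      0 < Real.sqrt ((p : ℝ × ℝ).1^2 + (p : ℝ × ℝ).2^2) :=
    fun p => Real.sqrt_pos.mpr (hFa0 _ p.2)
  have hnsq : ∀ p : {p : ℝ × ℝ | Fa a p = k},
      Real.sqrt ((p : ℝ × ℝ).1^2 + (p : ℝ × ℝ).2^2) ^ 2
        = (p : ℝ × ℝ).1^2 + (p : ℝ × ℝ).2^2 :=
    fun p => Real.sq_sqrt (hFa0 _ p.2).le
  set n : ℝ × ℝ → ℝ := fun q => Real.sqrt (q.1^2 + q.2^2) with hn
  let ψ : {p : ℝ × ℝ | Fa a p = k} → Metric.sphere (0 : EuclideanSpace ℝ (Fin 2)) 1 :=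
    fun p => ⟨(WithLp.toLp 2 ![(p : ℝ × ℝ).1 / n p, (p : ℝ × ℝ).2 / n p] : EuclideanSpace ℝ (Fin 2)),
      sphere_mem_of _ _ (by
        have h1 := hnpos p
        have h2 := hnsq p
        field_simp
        rw [div_eq_one_iff_eq (b := n p ^ 2) (pow_ne_zero 2 h1.ne')]; exact h2.symm)⟩
  have hψcont : Continuous ψ := by
    apply Continuous.subtype_mk
    show Continuous fun p : {p : ℝ × ℝ | Fa a p = k} =>
      WithLp.toLp 2 ![(p : ℝ × ℝ).1 / n p, (p : ℝ × ℝ).2 / n p]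
    refine (PiLp.continuous_toLp 2 (fun _ : Fin 2 => ℝ)).comp ?_
    have hnc : Continuous fun p : {p : ℝ × ℝ | Fa a p = k} => n p := by
      apply Real.continuous_sqrt.comp
      fun_prop
    have hc1 : Continuous fun p : {p : ℝ × ℝ | Fa a p = k} => (p : ℝ × ℝ).1 / n p :=
      Continuous.div (by fun_prop) hnc (fun p => (hnpos p).ne')
    have hc2 : Continuous fun p : {p : ℝ × ℝ | Fa a p = k} => (p : ℝ × ℝ).2 / n p :=
      Continuous.div (by fun_prop) hnc (fun p => (hnpos p).ne')
    apply continuous_pi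
    intro i
    fin_cases i
    · simpa using hc1
    · simpa using hc2
  have hbij : Function.Bijective ψ := by
    constructor
    · -- injective
      rintro p q hpq
      have hvec := Subtype.ext_iff.mp hpq
      have h0 : (p : ℝ × ℝ).1 / n p = (q : ℝ × ℝ).1 / n q := by
        have := congrArg (fun v : EuclideanSpace ℝ (Fin 2) => v 0) hvec; simpa [ψ] using this
      have h1 : (p : ℝ × ℝ).2 / n p = (q : ℝ × ℝ).2 / n q := by
        have := congrArg (fun v : EuclideanSpace ℝ (Fin 2) => v 1) hvec; simpa [ψ] using this
      have hnp := hnpos p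
      have hnq := hnpos q
      set μ : ℝ := n q / n p with hμ
      have hμpos : 0 < μ := div_pos hnq hnp
      have hqx : (q : ℝ × ℝ).1 = μ * (p : ℝ × ℝ).1 := by
        rw [hμ, div_mul_eq_mul_div, eq_div_iff (show n p ≠ 0 from hnp.ne')]; rw [div_eq_div_iff (b := n p) (d := n q) hnp.ne' hnq.ne'] at h0; linarith [h0]
      have hqy : (q : ℝ × ℝ).2 = μ * (p : ℝ × ℝ).2 := by
        rw [hμ, div_mul_eq_mul_div, eq_div_iff (show n p ≠ 0 from hnp.ne')]; rw [div_eq_div_iff (b := n p) (d := n q) hnp.ne' hnq.ne'] at h1; linarith [h1]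
      have hA := hFa0 _ p.2
      have hp' : Fa a (p : ℝ × ℝ) = k := p.2
      have hq' : Fa a (q : ℝ × ℝ) = k := q.2
      have e1 : (fun t : ℝ => t*((p : ℝ × ℝ).1^2+(p : ℝ × ℝ).2^2)
          + (1/9)*(t*(a*(p : ℝ × ℝ).1^2+(p : ℝ × ℝ).2^2/a) - (9/8)*(a+1/a))^2) 1
          = Fa a (p : ℝ × ℝ) := by
        simp only []; unfold Fa; ring
      have e2 : (fun t : ℝ => t*((p : ℝ × ℝ).1^2+(p : ℝ × ℝ).2^2)
          + (1/9)*(t*(a*(p : ℝ × ℝ).1^2+(p : ℝ × ℝ).2^2/a) - (9/8)*(a+1/a))^2) (μ^2)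
          = Fa a (q : ℝ × ℝ) := by
        simp only []; unfold Fa; rw [hqx, hqy]; ring
      have hμ1 : μ^2 = 1 := by
        refine (mono (p : ℝ × ℝ).1 (p : ℝ × ℝ).2 hA).injOn
          (Set.mem_Ici.mpr (sq_nonneg μ)) (Set.mem_Ici.mpr zero_le_one) ?_
        exact e2.trans (hq'.trans (hp'.symm.trans e1.symm))
      have hμeq : μ = 1 := by
        have hfac : (μ - 1) * (μ + 1) = 0 := by linear_combination hμ1
        rcases mul_eq_zero.mp hfac with h | h
        · linarith
        · linarith
      apply Subtype.ext
      apply Prod.ext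
      · rw [hqx, hμeq, one_mul]
      · rw [hqy, hμeq, one_mul]
    · -- surjective
      rintro ⟨u, hu⟩
      have hsum := sphere_sum_sq u hu
      obtain ⟨t, htpos, hgt⟩ := exist (u 0) (u 1) hsum
      obtain ⟨s, hs, hspos⟩ : ∃ s : ℝ, s^2 = t ∧ 0 < s :=
        ⟨Real.sqrt t, Real.sq_sqrt htpos.le, Real.sqrt_pos.mpr htpos⟩
      subst hs
      refine ⟨⟨(s * u 0, s * u 1), ?_⟩, ?_⟩
      · show Fa a (s * u 0, s * u 1) = k
        unfold Fa
        simp only []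
        linear_combination hgt + (s^2) * hsum
      · apply Subtype.ext
        show (WithLp.toLp 2 ![(s * u 0) / n (s * u 0, s * u 1), (s * u 1) / n (s * u 0, s * u 1)]
          : EuclideanSpace ℝ (Fin 2)) = u
        have hns : n (s * u 0, s * u 1) = s := by
          rw [hn]
          simp only []
          rw [show (s * u 0)^2 + (s * u 1)^2 = s^2 by linear_combination s^2 * hsum]
          exact Real.sqrt_sq hspos.le
        rw [hns]
        ext i
        fin_cases i <;> simp [mul_div_cancel_left₀, hspos.ne']
  exact ⟨Continuous.homeoOfEquivCompactToT2 (f := Equiv.ofBijective ψ hbij) hψcont⟩
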